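/- Every minor of a Bessel collocation matrix at positive increasing nodes is positive; in particular, for any 0 < t_0 < ⋯ < t_{n-1}, the determinant det(B_{j-1}(t_{i-1}))_{1≤i,j≤n} > 0. -/

import Mathlib

open Finset Matrix

theorem det_mul_expand {p N : ℕ} (V : Matrix (Fin p) (Fin N) ℝ) (W : Matrix (Fin N) (Fin p) ℝ) :
    (V * W).det = ∑ f : Fin p → Fin N, (∏ i, V i (f i)) * (W.submatrix f id).det := by
  have h : (V * W) = Matrix.of fun i => ∑ t, V i t • (W t) := by
    ext i j
    simp [Matrix.mul_apply]
  rw [h]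
  have e1 := MultilinearMap.map_sum
    (Matrix.detRowAlternating (n := Fin p) (R := ℝ)).toMultilinearMap
    (fun (i : Fin p) (t : Fin N) => V i t • W t)
  have e2 : ∀ f : Fin p → Fin N,
      Matrix.detRowAlternating.toMultilinearMap (fun i => V i (f i) • W (f i))
        = (∏ i, V i (f i)) * (W.submatrix f id).det := by
    intro f
    have := MultilinearMap.map_smul_univ
      (Matrix.detRowAlternating (n := Fin p) (R := ℝ)).toMultilinearMap
      (fun i => V i (f i)) (fun i => W (f i))
    rw [this, smul_eq_mul]
    rfl
  calc (Matrix.of fun i => ∑ t, V i t • (W t) : Matrix (Fin p) (Fin p) ℝ).det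
      = Matrix.detRowAlternating.toMultilinearMap (fun i => ∑ t, V i t • (W t)) := rfl
    _ = ∑ f : Fin p → Fin N, Matrix.detRowAlternating.toMultilinearMap
          (fun i => V i (f i) • W (f i)) := e1
    _ = ∑ f : Fin p → Fin N, (∏ i, V i (f i)) * (W.submatrix f id).det := by
        exact Finset.sum_congr rfl fun f _ => e2 f

theorem cauchyBinet {p N : ℕ} (V : Matrix (Fin p) (Fin N) ℝ) (W : Matrix (Fin N) (Fin p) ℝ) :
    (V * W).det = ∑ s ∈ ((Finset.univ : Finset (Fin N)).powersetCard p).attach,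
      (V.submatrix id (s.1.orderEmbOfFin (Finset.mem_powersetCard.mp s.2).2)).det *
      (W.submatrix (s.1.orderEmbOfFin (Finset.mem_powersetCard.mp s.2).2) id).det := by
  classical
  rw [det_mul_expand]
  -- drop non-injective f
  have hz : ∀ f ∈ (Finset.univ : Finset (Fin p → Fin N)),
      (∏ i, V i (f i)) * (W.submatrix f id).det ≠ 0 → Function.Injective f := by
    intro f _ hne
    by_contra hinj
    apply hne
    simp only [Function.Injective, not_forall] at hinj
    obtain ⟨a, b, hab, hne'⟩ := hinj
    have : (W.submatrix f id).det = 0 :=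
      Matrix.det_zero_of_row_eq hne' (by ext j; simp [hab])
    rw [this, mul_zero]
  rw [← Finset.sum_filter_of_ne hz]
  -- expand dets of V-submatrices on the RHS
  have hrhs : ∀ s : {x // x ∈ (Finset.univ : Finset (Fin N)).powersetCard p},
      (V.submatrix id (s.1.orderEmbOfFin (Finset.mem_powersetCard.mp s.2).2)).det *
      (W.submatrix (s.1.orderEmbOfFin (Finset.mem_powersetCard.mp s.2).2) id).det
      = ∑ σ : Equiv.Perm (Fin p),
          (Equiv.Perm.sign σ : ℝ) * (∏ i, V (σ i) (s.1.orderEmbOfFin (Finset.mem_powersetCard.mp s.2).2 i)) *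
          (W.submatrix (s.1.orderEmbOfFin (Finset.mem_powersetCard.mp s.2).2) id).det := by
    intro s
    rw [Matrix.det_apply', Finset.sum_mul]
    refine Finset.sum_congr rfl fun σ _ => ?_
    simp only [Matrix.submatrix_apply, id]
  rw [Finset.sum_congr rfl fun s _ => hrhs s, ← Finset.sum_product']
  -- bijection
  refine (Finset.sum_bij
    (i := fun (x : {x // x ∈ (Finset.univ : Finset (Fin N)).powersetCard p} × Equiv.Perm (Fin p)) _ =>
      fun i => x.1.1.orderEmbOfFin (Finset.mem_powersetCard.mp x.1.2).2 (x.2⁻¹ i))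
    ?_ ?_ ?_ ?_).symm
  · intro a _
    simp only [Finset.mem_filter, Finset.mem_univ, true_and]
    exact ((a.1.1.orderEmbOfFin _).injective).comp (Equiv.injective _)
  · -- injectivity
    intro a _ b _ hab'
    have hab : (fun i => a.1.1.orderEmbOfFin (Finset.mem_powersetCard.mp a.1.2).2 (a.2⁻¹ i))
        = (fun i => b.1.1.orderEmbOfFin (Finset.mem_powersetCard.mp b.1.2).2 (b.2⁻¹ i)) := hab'
    have him : ∀ (x : {x // x ∈ (Finset.univ : Finset (Fin N)).powersetCard p} × Equiv.Perm (Fin p)),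
        Finset.univ.image (fun i => x.1.1.orderEmbOfFin (Finset.mem_powersetCard.mp x.1.2).2 (x.2⁻¹ i)) = x.1.1 := by
      intro x
      apply Finset.coe_injective
      rw [Finset.coe_image, Finset.coe_univ, Set.image_univ]
      rw [show (fun i => x.1.1.orderEmbOfFin (Finset.mem_powersetCard.mp x.1.2).2 (x.2⁻¹ i))
        = (x.1.1.orderEmbOfFin (Finset.mem_powersetCard.mp x.1.2).2) ∘ (x.2⁻¹ : Equiv.Perm (Fin p)) from rfl]
      rw [Set.range_comp, Equiv.range_eq_univ, Set.image_univ, Finset.range_orderEmbOfFin]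
    have h1 : a.1.1 = b.1.1 := by
      rw [← him a, ← him b]
      exact congrArg (fun g => Finset.image g Finset.univ) hab
    obtain ⟨⟨sa, ha⟩, σa⟩ := a
    obtain ⟨⟨sb, hb⟩, σb⟩ := b
    simp only at h1
    subst h1
    have h2 : σa = σb := by
      refine inv_injective (Equiv.ext fun i => ?_)
      exact (sa.orderEmbOfFin (Finset.mem_powersetCard.mp ha).2).injective (congrFun hab i)
    subst h2
    rfl
  · -- surjectivity
    intro f hf
    have hfi : Function.Injective f := (Finset.mem_filter.mp hf).2
    set s : Finset (Fin N) := Finset.univ.image f with hs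
    have hcard : s.card = p := by
      rw [hs, Finset.card_image_of_injective _ hfi, Finset.card_univ, Fintype.card_fin]
    have hmem : s ∈ (Finset.univ : Finset (Fin N)).powersetCard p :=
      Finset.mem_powersetCard.mpr ⟨Finset.subset_univ _, hcard⟩
    have hfs : ∀ i, f i ∈ s := fun i => Finset.mem_image_of_mem f (Finset.mem_univ i)
    set τ : Fin p → Fin p := fun i => (s.orderIsoOfFin hcard).symm ⟨f i, hfs i⟩ with hτ
    have hτi : Function.Injective τ := by
      intro i j hij
      apply hfi
      have h2 : (((s.orderIsoOfFin hcard) (τ i) : {x // x ∈ s}) : Fin N)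
          = (((s.orderIsoOfFin hcard) (τ j) : {x // x ∈ s}) : Fin N) := by rw [hij]
      simp only [hτ, OrderIso.apply_symm_apply] at h2
      exact h2
    have hτb : Function.Bijective τ := Finite.injective_iff_bijective.mp hτi
    refine ⟨⟨⟨s, hmem⟩, (Equiv.ofBijective τ hτb)⁻¹⟩, Finset.mem_product.mpr ⟨Finset.mem_attach _ _, Finset.mem_univ _⟩, ?_⟩
    funext i
    show s.orderEmbOfFin _ ((Equiv.ofBijective τ hτb)⁻¹⁻¹ i) = f i
    rw [inv_inv]
    show s.orderEmbOfFin _ (τ i) = f i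
    have key : ∀ z : {x // x ∈ s}, s.orderEmbOfFin hcard ((s.orderIsoOfFin hcard).symm z) = (z : Fin N) := by
      intro z
      rw [← Finset.coe_orderIsoOfFin_apply]
      simp
    exact key ⟨f i, hfs i⟩
  · -- terms agree
    intro x _
    obtain ⟨⟨s, hsmem⟩, σ⟩ := x
    set e := s.orderEmbOfFin (Finset.mem_powersetCard.mp hsmem).2 with he
    show (Equiv.Perm.sign σ : ℝ) * (∏ i, V (σ i) (e i)) * (W.submatrix e id).det
      = (∏ i, V i (e (σ⁻¹ i))) * (W.submatrix (fun i => e (σ⁻¹ i)) id).det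
    have hW : (W.submatrix (fun i => e (σ⁻¹ i)) id).det
        = (Equiv.Perm.sign σ : ℝ) * (W.submatrix e id).det := by
      have : (W.submatrix (fun i => e (σ⁻¹ i)) id) = ((W.submatrix e id).submatrix (σ⁻¹ : Equiv.Perm (Fin p)) id) := rfl
      rw [this, Matrix.det_permute, Equiv.Perm.sign_inv]
    have hV : (∏ i, V i (e (σ⁻¹ i))) = ∏ j, V (σ j) (e j) := by
      have := Equiv.prod_comp (σ⁻¹ : Equiv.Perm (Fin p)) (fun j => V (σ j) (e j))
      rw [← this]
      exact Finset.prod_congr rfl fun i _ => by simp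
    rw [hW, hV]
    ring

open Finset Matrix

/-- A nontrivial real "fewnomial" `x ↦ ∑ c j * x ^ a j` cannot vanish at `k` distinct
positive points if it has `k` terms. -/
theorem fewnomial_zero : ∀ (k : ℕ) (a c : Fin k → ℝ), StrictMono a →
    ∀ (x : Fin k → ℝ), StrictMono x → (∀ i, 0 < x i) →
    (∀ i, ∑ j, c j * x i ^ a j = 0) → ∀ j, c j = 0 := by
  intro k
  induction k with
  | zero => intro a c _ x _ _ _ j; exact absurd j.2 (by omega)
  | succ k IH =>
    intro a c ha x hx hxpos hroot
    -- consider g y = ∑ c j * y ^ (a j - a 0)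
    set g : ℝ → ℝ := fun y => ∑ j, c j * y ^ (a j - a 0) with hg
    have hgroot : ∀ i, g (x i) = 0 := by
      intro i
      rw [hg]
      simp only
      have : ∀ j, c j * x i ^ (a j - a 0) = (c j * x i ^ a j) / (x i ^ a 0) := by
        intro j
        rw [Real.rpow_sub (hxpos i)]
        ring
      rw [Finset.sum_congr rfl fun j _ => this j, ← Finset.sum_div, hroot i, zero_div]
    -- Rolle between consecutive roots
    have key : ∀ i : Fin k, ∃ y ∈ Set.Ioo (x i.castSucc) (x i.succ),
        ∑ j, c j * ((a j - a 0) * y ^ (a j - a 0 - 1)) = 0 := by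
      intro i
      have hlt : x i.castSucc < x i.succ := hx (Fin.castSucc_lt_succ (i := i))
      have hposIcc : ∀ y ∈ Set.Icc (x i.castSucc) (x i.succ), 0 < y :=
        fun y hy => lt_of_lt_of_le (hxpos i.castSucc) hy.1
      have hderiv : ∀ y ∈ Set.Ioo (x i.castSucc) (x i.succ),
          HasDerivAt g (∑ j, c j * ((a j - a 0) * y ^ (a j - a 0 - 1))) y := by
        intro y hy
        have hy0 : y ≠ 0 := ne_of_gt (hposIcc y ⟨le_of_lt hy.1, le_of_lt hy.2⟩)
        have : HasDerivAt (fun y => ∑ j, c j * y ^ (a j - a 0))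
            (∑ j, c j * ((a j - a 0) * y ^ (a j - a 0 - 1))) y := by
          apply HasDerivAt.fun_sum
          intro j _
          exact (Real.hasDerivAt_rpow_const (Or.inl hy0)).const_mul (c j)
        exact this
      have hcont : ContinuousOn g (Set.Icc (x i.castSucc) (x i.succ)) := by
        apply continuousOn_finset_sum
        intro j _
        refine continuousOn_const.mul ?_
        intro y hy
        exact (Real.continuousAt_rpow_const y _ (Or.inl (ne_of_gt (hposIcc y hy)))).continuousWithinAt
      have := exists_hasDerivAt_eq_zero hlt hcont
        (by rw [hgroot i.castSucc, hgroot i.succ]) hderiv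
      exact this
    choose y hy hyroot using key
    have hy' : ∀ i : Fin k, 0 < y i := fun i => lt_trans (hxpos i.castSucc) (hy i).1
    have hymono : StrictMono y := by
      intro i j hij
      have h2 : x i.succ ≤ x j.castSucc := hx.monotone (by
        simp only [Fin.le_def, Fin.val_succ, Fin.coe_castSucc]
        exact hij)
      exact lt_trans (lt_of_lt_of_le (hy i).2 h2) (hy j).1
    have hz : ∀ j : Fin k, c j.succ * (a j.succ - a 0) = 0 := by
      apply IH (fun j => a j.succ - a 0 - 1) (fun j => c j.succ * (a j.succ - a 0))
        (fun i j hij => by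
          show a i.succ - a 0 - 1 < a j.succ - a 0 - 1
          have := ha (Fin.succ_lt_succ_iff.mpr hij)
          linarith) y hymono hy'
      intro i
      have h0 := hyroot i
      rw [Fin.sum_univ_succ] at h0
      simp only [sub_self, zero_mul, mul_zero, zero_add] at h0
      rw [← h0]
      exact Finset.sum_congr rfl fun j _ => by ring
    have hcsucc : ∀ j : Fin k, c j.succ = 0 := by
      intro j
      rcases mul_eq_zero.mp (hz j) with h | h
      · exact h
      · exfalso
        have : a 0 < a j.succ := ha (Fin.succ_pos j)
        linarith
    have hc0 : c 0 = 0 := by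
      have h0 := hroot 0
      rw [Fin.sum_univ_succ] at h0
      simp only [hcsucc, zero_mul, Finset.sum_const_zero, add_zero] at h0
      rcases mul_eq_zero.mp h0 with h | h
      · exact h
      · exact absurd h (ne_of_gt (Real.rpow_pos_of_pos (hxpos 0) _))
    intro j
    rcases Fin.eq_zero_or_eq_succ j with rfl | ⟨j', rfl⟩
    · exact hc0
    · exact hcsucc j'

theorem gv_pos : ∀ (k : ℕ) (a x : Fin k → ℝ), StrictMono a → StrictMono x →
    (∀ i, 0 < x i) → 0 < Matrix.det (Matrix.of fun i j => x i ^ a j) := by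
  intro k
  induction k with
  | zero =>
    intro a x _ _ _
    simp [Matrix.det_isEmpty]
  | succ k IH =>
    intro a x ha hx hxpos
    set d : Fin (k + 1) → ℝ := fun j => (-1 : ℝ) ^ (k + (j : ℕ)) *
      (Matrix.det (Matrix.of fun (i' j' : Fin k) =>
        x (Fin.castSucc i') ^ a (j.succAbove j'))) with hd
    set F : ℝ → ℝ := fun w => ∑ j, d j * w ^ a j with hF
    -- determinant with variable last row equals F
    have hdet : ∀ w : ℝ,
        (Matrix.of fun i j => ((Fin.snoc (α := fun _ : Fin (k+1) => ℝ) (fun i' : Fin k => x (Fin.castSucc i')) w i)) ^ a j).det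
          = F w := by
      intro w
      rw [Matrix.det_succ_row _ (Fin.last k)]
      refine Finset.sum_congr rfl fun j _ => ?_
      rw [hd]
      simp only
      simp only [Matrix.of_apply, Fin.snoc_last, Fin.val_last]
      have hsub : ((Matrix.of fun i j' => ((Fin.snoc (α := fun _ : Fin (k+1) => ℝ) (fun i' : Fin k => x (Fin.castSucc i')) w i)) ^ a j').submatrix
          (Fin.last k).succAbove j.succAbove)
          = Matrix.of fun (i' j' : Fin k) => x (Fin.castSucc i') ^ a (j.succAbove j') := by
        ext i' j'
        simp [Fin.succAbove_last, Fin.snoc_castSucc]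
      rw [hsub]
      ring
    have hL : ∀ i : Fin k, x (Fin.castSucc i) < x (Fin.last k) :=
      fun i => hx (Fin.castSucc_lt_last i)
    -- roots of F at the first k nodes
    have hFr : ∀ i : Fin k, F (x (Fin.castSucc i)) = 0 := by
      intro i
      rw [← hdet (x (Fin.castSucc i))]
      apply Matrix.det_zero_of_row_eq (ne_of_lt (Fin.castSucc_lt_last i))
      funext j
      simp [Fin.snoc_castSucc, Fin.snoc_last]
    -- the leading coefficient is positive
    have hdlast : 0 < d (Fin.last k) := by
      rw [hd]
      simp only [Fin.val_last, Fin.succAbove_last]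
      rw [show k + k = 2 * k by ring, pow_mul, neg_one_sq, one_pow, one_mul]
      exact IH (fun j' => a (Fin.castSucc j')) (fun i' => x (Fin.castSucc i'))
        (fun i j hij => ha (by simpa using hij)) (fun i j hij => hx (by simpa using hij))
        (fun i => hxpos _)
    -- F has no root ≥ x (last)
    have hnoroot : ∀ w, x (Fin.last k) ≤ w → F w ≠ 0 := by
      intro w hw hFw
      set v : Fin (k + 1) → ℝ := Fin.snoc (α := fun _ : Fin (k+1) => ℝ) (fun i : Fin k => x (Fin.castSucc i)) w with hv
      have hvm : StrictMono v := by
        intro i j hij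
        by_cases hj : j = Fin.last k
        · subst hj
          obtain ⟨i', rfl⟩ := Fin.exists_castSucc_eq.mpr (ne_of_lt hij)
          rw [hv]
          simp only [Fin.snoc_castSucc, Fin.snoc_last]
          exact lt_of_lt_of_le (hL i') hw
        · obtain ⟨j', rfl⟩ := Fin.exists_castSucc_eq.mpr hj
          obtain ⟨i', rfl⟩ := Fin.exists_castSucc_eq.mpr
            (ne_of_lt (lt_of_lt_of_le hij (le_of_lt (Fin.castSucc_lt_last j'))))
          rw [hv]
          simp only [Fin.snoc_castSucc]
          exact hx hij
      have hvpos : ∀ i, 0 < v i := by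
        intro i
        by_cases hi : i = Fin.last k
        · subst hi
          rw [hv]
          simp only [Fin.snoc_last]
          exact lt_of_lt_of_le (hxpos _) hw
        · obtain ⟨i', rfl⟩ := Fin.exists_castSucc_eq.mpr hi
          rw [hv]
          simp only [Fin.snoc_castSucc]
          exact hxpos _
      have hvroot : ∀ i, ∑ j, d j * v i ^ a j = 0 := by
        intro i
        by_cases hi : i = Fin.last k
        · subst hi
          rw [hv]
          simp only [Fin.snoc_last]
          exact hFw
        · obtain ⟨i', rfl⟩ := Fin.exists_castSucc_eq.mpr hi
          rw [hv]
          simp only [Fin.snoc_castSucc]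
          exact hFr i'
      exact absurd (fewnomial_zero (k+1) a d ha v hvm hvpos hvroot (Fin.last k))
        (ne_of_gt hdlast)
    -- asymptotics at +∞
    have hFfac : ∀ y : ℝ, 0 < y →
        F y = (∑ j, d j * y ^ (a j - a (Fin.last k))) * y ^ a (Fin.last k) := by
      intro y hy
      rw [hF, Finset.sum_mul]
      refine Finset.sum_congr rfl fun j _ => ?_
      rw [Real.rpow_sub hy]
      have : y ^ a (Fin.last k) ≠ 0 := ne_of_gt (Real.rpow_pos_of_pos hy _)
      field_simp
    have htend : Filter.Tendsto (fun y => ∑ j, d j * y ^ (a j - a (Fin.last k)))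
        Filter.atTop (nhds (d (Fin.last k))) := by
      have h1 : Filter.Tendsto (fun y => ∑ j, d j * y ^ (a j - a (Fin.last k)))
          Filter.atTop (nhds (∑ j : Fin (k+1), if j = Fin.last k then d (Fin.last k) else 0)) := by
        apply tendsto_finset_sum
        intro j _
        by_cases hj : j = Fin.last k
        · subst hj
          simp only [if_pos rfl, sub_self]
          have : (fun y : ℝ => d (Fin.last k) * y ^ (0:ℝ)) = fun _ => d (Fin.last k) := by
            funext y
            rw [Real.rpow_zero, mul_one]
          rw [this]
          exact tendsto_const_nhds
        · rw [if_neg hj]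
          have hjlt : a j < a (Fin.last k) := ha (Fin.lt_last_iff_ne_last.mpr hj)
          have hneg : a j - a (Fin.last k) = -(a (Fin.last k) - a j) := by ring
          rw [show (fun y : ℝ => d j * y ^ (a j - a (Fin.last k)))
              = fun y : ℝ => d j * y ^ (-(a (Fin.last k) - a j)) from funext fun y => by rw [hneg]]
          have h2 := ((tendsto_rpow_neg_atTop
              (show (0:ℝ) < a (Fin.last k) - a j by linarith)).const_mul (d j))
          rw [mul_zero] at h2
          exact h2
      simpa using h1
    have hev := (htend.eventually (eventually_gt_nhds hdlast)).and
      ((Filter.eventually_gt_atTop (x (Fin.last k))).and (Filter.eventually_gt_atTop 0))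
    obtain ⟨X0, hGX0, hX0L, hX0pos⟩ := hev.exists
    have hFX0 : 0 < F X0 := by
      rw [hFfac X0 hX0pos]
      exact mul_pos hGX0 (Real.rpow_pos_of_pos hX0pos _)
    -- rewrite the goal as F (x last)
    have hxeq : (Matrix.of fun i j => x i ^ a j)
        = Matrix.of fun i j =>
          ((Fin.snoc (α := fun _ : Fin (k+1) => ℝ) (fun i' : Fin k => x (Fin.castSucc i')) (x (Fin.last k)) i)) ^ a j := by
      ext i j
      by_cases hi : i = Fin.last k
      · subst hi
        simp [Fin.snoc_last]
      · obtain ⟨i', rfl⟩ := Fin.exists_castSucc_eq.mpr hi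
        simp [Fin.snoc_castSucc]
    rw [hxeq, hdet (x (Fin.last k))]
    rcases lt_trichotomy (F (x (Fin.last k))) 0 with hneg | hzero | hpos
    · exfalso
      have hcont : ContinuousOn F (Set.Icc (x (Fin.last k)) X0) := by
        apply continuousOn_finset_sum
        intro j _
        refine continuousOn_const.mul ?_
        intro y hy
        have : 0 < y := lt_of_lt_of_le (hxpos _) hy.1
        exact (Real.continuousAt_rpow_const y _ (Or.inl (ne_of_gt this))).continuousWithinAt
      have h0mem : (0:ℝ) ∈ Set.Icc (F (x (Fin.last k))) (F X0) :=
        ⟨le_of_lt hneg, le_of_lt hFX0⟩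
      obtain ⟨z, hz, hFz⟩ := intermediate_value_Icc (le_of_lt hX0L) hcont h0mem
      exact hnoroot z hz.1 hFz
    · exact absurd hzero (hnoroot _ le_rfl)
    · exact hpos

theorem gv_pos_nat (k : ℕ) (e : Fin k → ℕ) (x : Fin k → ℝ) (he : StrictMono e)
    (hx : StrictMono x) (hxpos : ∀ i, 0 < x i) :
    0 < Matrix.det (Matrix.of fun i j => x i ^ (e j)) := by
  have h := gv_pos k (fun j => (e j : ℝ)) x
    (fun i j hij => by simp only; exact_mod_cast he hij) hx hxpos
  have : (Matrix.of fun i j => x i ^ ((e j : ℝ))) = Matrix.of fun i j => x i ^ (e j) := by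
    ext i j
    exact Real.rpow_natCast _ _
  rwa [this] at h

open Finset Matrix Polynomial

theorem staircase_det (dd : ℕ) (U : ℕ → ℕ → ℝ) (hU0 : ∀ i j, 0 ≤ U i j)
    (hUz : ∀ i j, U i j ≠ 0 → i + dd ≤ j ∧ j ≤ i + dd + 1)
    {p : ℕ} (r c : Fin p → ℕ) (hr : StrictMono r) (hc : StrictMono c) :
    Matrix.det (Matrix.of fun i j => U (r i) (c j)) = ∏ i, U (r i) (c i) := by
  rw [Matrix.det_apply']
  rw [Finset.sum_eq_single (1 : Equiv.Perm (Fin p))]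
  · simp
  · intro σ _ hσ
    have hnm : ¬ StrictMono (σ : Fin p → Fin p) := by
      intro hmono
      apply hσ
      have hid : (σ : Fin p → Fin p) = id :=
        (StrictMono.range_inj hmono strictMono_id).mp (by rw [Equiv.range_eq_univ, Set.range_id])
      exact Equiv.ext fun i => congrFun hid i
    simp only [StrictMono, not_forall] at hnm
    obtain ⟨i, j, hij, hnlt⟩ := hnm
    have hlt : σ j < σ i :=
      lt_of_le_of_ne (not_lt.mp hnlt) (fun h => (ne_of_lt hij) (σ.injective h.symm))
    have hzero : ∏ x, (Matrix.of fun i j => U (r i) (c j)) (σ x) x = 0 := by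
      by_cases hzi : U (r (σ i)) (c i) = 0
      · exact Finset.prod_eq_zero (Finset.mem_univ i) hzi
      · refine Finset.prod_eq_zero (Finset.mem_univ j) ?_
        show U (r (σ j)) (c j) = 0
        by_contra hzj
        have h1 := (hUz _ _ hzi).1
        have h2 := (hUz _ _ hzj).2
        have h3 : r (σ j) < r (σ i) := hr hlt
        have h4 : c i < c j := hc hij
        omega
    rw [hzero, mul_zero]
  · intro h
    exact absurd (Finset.mem_univ _) h

theorem coeffPow_TN (f : Polynomial ℝ) (sdeg : ℕ)
    (hsupp : ∀ m, f.coeff m ≠ 0 → m = sdeg ∨ m = sdeg + 1)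
    (hf0 : ∀ m, 0 ≤ f.coeff m) :
    ∀ (n p : ℕ) (ks ms : Fin p → ℕ), p + ∑ i, ks i ≤ n → StrictMono ks → StrictMono ms →
      0 ≤ Matrix.det (Matrix.of fun i j => (f ^ (ks i)).coeff (ms j)) := by
  intro n
  induction n using Nat.strong_induction_on with
  | _ n IH =>
    intro p ks ms hn hks hms
    match p, ks, ms, hn, hks, hms with
    | 0, ks, ms, hn, hks, hms =>
      simp [Matrix.det_isEmpty]
    | (q+1), ks, ms, hn, hks, hms =>
      have hks0le : ∀ i, ks 0 ≤ ks i := fun i => hks.monotone (Fin.zero_le i)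
      by_cases h0 : ks 0 = 0
      · by_cases hm0 : ms 0 = 0
        · -- expand along the first row
          have hms0 : ∀ j : Fin (q+1), j ≠ 0 → ms j ≠ 0 := by
            intro j hj
            have := hms (Fin.pos_of_ne_zero hj)
            omega
          rw [Matrix.det_succ_row_zero, Finset.sum_eq_single 0]
          · have hA : ((Matrix.of fun i j => (f ^ (ks i)).coeff (ms j)).submatrix
                Fin.succ (Fin.succAbove 0))
                = Matrix.of fun (i j : Fin q) => (f ^ (ks i.succ)).coeff (ms j.succ) := by
              ext i j
              simp [Fin.zero_succAbove]
            rw [hA]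
            have hd0 : (Matrix.of fun i j => (f ^ (ks i)).coeff (ms j)) 0 0 = 1 := by
              simp [h0, hm0]
            rw [hd0]
            have hmeas : q + ∑ i : Fin q, ks i.succ < n := by
              have hsum : ∑ i : Fin (q+1), ks i = ks 0 + ∑ i : Fin q, ks i.succ :=
                Fin.sum_univ_succ _
              omega
            have := IH (q + ∑ i : Fin q, ks i.succ) hmeas q
              (fun i => ks i.succ) (fun j => ms j.succ) le_rfl
              (fun i j hij => hks (by simpa using hij))
              (fun i j hij => hms (by simpa using hij))
            simpa using this
          · intro j _ hj
            have : (Matrix.of fun i j => (f ^ (ks i)).coeff (ms j)) 0 j = 0 := by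
              simp only [Matrix.of_apply, h0, pow_zero, Polynomial.coeff_one]
              rw [if_neg (hms0 j hj)]
            rw [this]
            ring
          · intro h
            exact absurd (Finset.mem_univ _) h
        · -- first row is zero
          have : (Matrix.of fun i j => (f ^ (ks i)).coeff (ms j)).det = 0 := by
            apply Matrix.det_eq_zero_of_row_eq_zero 0
            intro j
            simp only [Matrix.of_apply, h0, pow_zero, Polynomial.coeff_one]
            rw [if_neg]
            have : ms 0 ≤ ms j := hms.monotone (Fin.zero_le j)
            omega
          rw [this]
      · -- all exponents positive: peel off one factor of f
        have hpos : ∀ i, 1 ≤ ks i := fun i => by have := hks0le i; omega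
        set N' : ℕ := ms (Fin.last q) + 1 with hN'
        have hmslt : ∀ j, ms j < N' := by
          intro j
          have : ms j ≤ ms (Fin.last q) := hms.monotone (Fin.le_last j)
          omega
        have key : (Matrix.of fun i j => (f ^ (ks i)).coeff (ms j)) =
            (Matrix.of fun (i : Fin (q+1)) (t : Fin N') => (f ^ (ks i - 1)).coeff t) *
            (Matrix.of fun (t : Fin N') (j : Fin (q+1)) =>
              (f * Polynomial.X ^ (t : ℕ)).coeff (ms j)) := by
          ext i j
          rw [Matrix.mul_apply]
          simp only [Matrix.of_apply]
          have hk : f ^ (ks i) = f ^ (ks i - 1) * f := by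
            rw [← pow_succ]
            congr 1
            have := hpos i
            omega
          rw [hk, Polynomial.coeff_mul, Finset.Nat.sum_antidiagonal_eq_sum_range_succ_mk]
          simp only [Matrix.of_apply]
          have hfin : ∑ x : Fin N', (f ^ (ks i - 1)).coeff (x:ℕ) *
                (f * Polynomial.X ^ (x:ℕ)).coeff (ms j)
              = ∑ t ∈ Finset.range N', (f ^ (ks i - 1)).coeff t *
                (f * Polynomial.X ^ t).coeff (ms j) :=
            Fin.sum_univ_eq_sum_range
              (fun t : ℕ => (f ^ (ks i - 1)).coeff t * (f * Polynomial.X ^ t).coeff (ms j)) N'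
          rw [hfin]
          rw [← Finset.sum_subset (Finset.range_subset_range.mpr (hmslt j))]
          · refine Finset.sum_congr rfl fun t ht => ?_
            rw [Polynomial.coeff_mul_X_pow']
            rw [if_pos (by simpa [Nat.lt_succ_iff] using ht)]
          · intro t _ ht
            rw [Polynomial.coeff_mul_X_pow', if_neg (by simpa [Nat.lt_succ_iff] using ht),
              mul_zero]
        rw [key, cauchyBinet]
        apply Finset.sum_nonneg
        intro s _
        apply mul_nonneg
        · -- minor of the coefficient matrix of f^(k-1)
          set e := s.1.orderEmbOfFin (Finset.mem_powersetCard.mp s.2).2 with he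
          have hsub : ((Matrix.of fun (i : Fin (q+1)) (t : Fin N') =>
              (f ^ (ks i - 1)).coeff t).submatrix id e)
              = Matrix.of fun i l => (f ^ (ks i - 1)).coeff ((e l : Fin N') : ℕ) := by
            ext i l
            rfl
          rw [hsub]
          have hmeas : (q+1) + ∑ i : Fin (q+1), (ks i - 1) < n := by
            have hsum : ∑ i : Fin (q+1), ks i
                = ∑ i : Fin (q+1), (ks i - 1) + ∑ _i : Fin (q+1), 1 := by
              rw [← Finset.sum_add_distrib]
              refine Finset.sum_congr rfl fun i _ => ?_
              have := hpos i
              omega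
            simp only [Finset.sum_const, Finset.card_univ, Fintype.card_fin, smul_eq_mul,
              mul_one] at hsum
            omega
          exact IH ((q+1) + ∑ i : Fin (q+1), (ks i - 1)) hmeas (q+1)
            (fun i => ks i - 1) (fun l => ((e l : Fin N') : ℕ)) le_rfl
            (fun i j hij => by
              have h1 := hks hij
              have h2 := hpos i
              simp only
              omega)
            (fun a b hab => by
              have := e.strictMono hab
              exact_mod_cast this)
        · -- minor of the staircase matrix
          set e := s.1.orderEmbOfFin (Finset.mem_powersetCard.mp s.2).2 with he
          set U : ℕ → ℕ → ℝ := fun t m => (f * Polynomial.X ^ t).coeff m with hU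
          have hU0 : ∀ t m, 0 ≤ U t m := by
            intro t m
            rw [hU]
            simp only
            rw [Polynomial.coeff_mul_X_pow']
            split
            · exact hf0 _
            · exact le_refl 0
          have hUz : ∀ t m, U t m ≠ 0 → t + sdeg ≤ m ∧ m ≤ t + sdeg + 1 := by
            intro t m hne
            rw [hU] at hne
            simp only at hne
            rw [Polynomial.coeff_mul_X_pow'] at hne
            by_cases htm : t ≤ m
            · rw [if_pos htm] at hne
              rcases hsupp _ hne with h | h <;> omega
            · rw [if_neg htm] at hne
              exact absurd rfl hne
          have hsub : ((Matrix.of fun (t : Fin N') (j : Fin (q+1)) =>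
              (f * Polynomial.X ^ (t : ℕ)).coeff (ms j)).submatrix e id)
              = Matrix.of fun l j => U ((e l : Fin N') : ℕ) (ms j) := by
            ext l j
            rfl
          rw [hsub]
          rw [staircase_det sdeg U hU0 hUz _ _
            (fun a b hab => by exact_mod_cast e.strictMono hab) hms]
          exact Finset.prod_nonneg fun l _ => hU0 _ _

open Finset Matrix Polynomial

theorem vandermonde_conv (m k N₂ : ℕ) (h : 2 * k < N₂) :
    ∑ t ∈ Finset.range N₂, m.choose t * (if k ≤ t then k.choose (t - k) else 0)
      = (m + k).choose (2 * k) := by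
  have hsub : Finset.range (2 * k + 1) ⊆ Finset.range N₂ := Finset.range_subset_range.mpr (by omega)
  have hz : ∀ t ∈ Finset.range N₂, t ∉ Finset.range (2 * k + 1) →
      m.choose t * (if k ≤ t then k.choose (t - k) else 0) = 0 := by
    intro t _ ht
    rw [Finset.mem_range, not_lt] at ht
    rw [if_pos (by omega : k ≤ t), Nat.choose_eq_zero_of_lt (show k < t - k by omega), mul_zero]
  calc ∑ t ∈ Finset.range N₂, m.choose t * (if k ≤ t then k.choose (t - k) else 0)
      = ∑ t ∈ Finset.range (2 * k + 1), m.choose t * (if k ≤ t then k.choose (t - k) else 0) :=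
        (Finset.sum_subset hsub hz).symm
    _ = ∑ t ∈ Finset.range (2 * k + 1), m.choose t * k.choose (2 * k - t) := by
        refine Finset.sum_congr rfl fun x hx => ?_
        rw [Finset.mem_range] at hx
        by_cases hkx : k ≤ x
        · rw [if_pos hkx]
          congr 1
          rw [show 2 * k - x = k - (x - k) by omega, Nat.choose_symm (by omega)]
        · rw [if_neg hkx, Nat.choose_eq_zero_of_lt (show k < 2 * k - x by omega), mul_zero]
    _ = (m + k).choose (2 * k) := by
        rw [Nat.add_choose_eq, Finset.Nat.sum_antidiagonal_eq_sum_range_succ_mk]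

theorem binom_TN (p : ℕ) (r c : Fin p → ℕ) (hr : StrictMono r) (hc : StrictMono c) :
    0 ≤ Matrix.det (Matrix.of fun i j => ((r i + c j).choose (2 * c j) : ℝ)) := by
  match p, r, c, hr, hc with
  | 0, r, c, hr, hc => simp [Matrix.det_isEmpty]
  | (q+1), r, c, hr, hc =>
    set N₂ : ℕ := r (Fin.last q) + 2 * c (Fin.last q) + 1 with hN₂
    have hRcoeff : ∀ (k m' : ℕ), ((Polynomial.X + Polynomial.X ^ 2 : Polynomial ℝ) ^ k).coeff m'
        = if k ≤ m' then ((k.choose (m' - k) : ℝ)) else 0 := by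
      intro k m'
      have hfac : (Polynomial.X + Polynomial.X ^ 2 : Polynomial ℝ) ^ k
          = (1 + Polynomial.X) ^ k * Polynomial.X ^ k := by
        rw [show (Polynomial.X + Polynomial.X ^ 2 : Polynomial ℝ)
            = (1 + Polynomial.X) * Polynomial.X by ring, mul_pow]
      rw [hfac, Polynomial.coeff_mul_X_pow']
      split
      · rw [Polynomial.coeff_one_add_X_pow]
      · rfl
    have key : (Matrix.of fun i j => ((r i + c j).choose (2 * c j) : ℝ)) =
        (Matrix.of fun (i : Fin (q+1)) (t : Fin N₂) =>
          ((1 + Polynomial.X : Polynomial ℝ) ^ (r i)).coeff (t : ℕ)) *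
        (Matrix.of fun (t : Fin N₂) (j : Fin (q+1)) =>
          ((Polynomial.X + Polynomial.X ^ 2 : Polynomial ℝ) ^ (c j)).coeff (t : ℕ)) := by
      ext i j
      rw [Matrix.mul_apply]
      simp only [Matrix.of_apply]
      have hckj : 2 * c j < N₂ := by
        have := hc.monotone (Fin.le_last j)
        omega
      have hid := vandermonde_conv (r i) (c j) N₂ hckj
      have hcast : ((r i + c j).choose (2 * c j) : ℝ)
          = ∑ t ∈ Finset.range N₂, ((r i).choose t : ℝ) *
              (if c j ≤ t then ((c j).choose (t - c j) : ℝ) else 0) := by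
        rw [← hid]
        push_cast
        refine Finset.sum_congr rfl fun x _ => ?_
        split <;> simp
      rw [hcast]
      have hfin : ∑ t : Fin N₂, ((1 + Polynomial.X : Polynomial ℝ) ^ (r i)).coeff (t : ℕ) *
            ((Polynomial.X + Polynomial.X ^ 2 : Polynomial ℝ) ^ (c j)).coeff (t : ℕ)
          = ∑ t ∈ Finset.range N₂, ((1 + Polynomial.X : Polynomial ℝ) ^ (r i)).coeff t *
            ((Polynomial.X + Polynomial.X ^ 2 : Polynomial ℝ) ^ (c j)).coeff t :=
        Fin.sum_univ_eq_sum_range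
          (fun t : ℕ => ((1 + Polynomial.X : Polynomial ℝ) ^ (r i)).coeff t *
            ((Polynomial.X + Polynomial.X ^ 2 : Polynomial ℝ) ^ (c j)).coeff t) N₂
      rw [hfin]
      refine Finset.sum_congr rfl fun x _ => ?_
      rw [Polynomial.coeff_one_add_X_pow, hRcoeff]
    rw [key, cauchyBinet]
    apply Finset.sum_nonneg
    intro s _
    set e := s.1.orderEmbOfFin (Finset.mem_powersetCard.mp s.2).2 with he
    apply mul_nonneg
    · have hsub : ((Matrix.of fun (i : Fin (q+1)) (t : Fin N₂) =>
          ((1 + Polynomial.X : Polynomial ℝ) ^ (r i)).coeff (t : ℕ)).submatrix id e)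
          = Matrix.of fun i l =>
            ((1 + Polynomial.X : Polynomial ℝ) ^ (r i)).coeff ((e l : Fin N₂) : ℕ) := by
        ext i l; rfl
      rw [hsub]
      apply coeffPow_TN (1 + Polynomial.X : Polynomial ℝ) 0
      · intro m hm
        by_contra hcon
        push_neg at hcon
        apply hm
        rw [Polynomial.coeff_add, Polynomial.coeff_one, Polynomial.coeff_X]
        rw [if_neg (by omega), if_neg (by omega)]
        norm_num
      · intro m
        rw [Polynomial.coeff_add, Polynomial.coeff_one, Polynomial.coeff_X]
        split <;> split <;> norm_num
      · exact le_refl ((q+1) + ∑ i, r i)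
      · exact hr
      · exact fun a b hab => by exact_mod_cast e.strictMono hab
    · have hsub : ((Matrix.of fun (t : Fin N₂) (j : Fin (q+1)) =>
          ((Polynomial.X + Polynomial.X ^ 2 : Polynomial ℝ) ^ (c j)).coeff (t : ℕ)).submatrix e id)
          = (Matrix.of fun (j : Fin (q+1)) (l : Fin (q+1)) =>
            ((Polynomial.X + Polynomial.X ^ 2 : Polynomial ℝ) ^ (c j)).coeff ((e l : Fin N₂) : ℕ))ᵀ := by
        ext l j; rfl
      rw [hsub, Matrix.det_transpose]
      apply coeffPow_TN (Polynomial.X + Polynomial.X ^ 2 : Polynomial ℝ) 1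
      · intro m hm
        by_contra hcon
        push_neg at hcon
        apply hm
        rw [Polynomial.coeff_add, Polynomial.coeff_X, Polynomial.coeff_X_pow]
        rw [if_neg (by omega), if_neg (by omega)]
        norm_num
      · intro m
        rw [Polynomial.coeff_add, Polynomial.coeff_X, Polynomial.coeff_X_pow]
        split <;> split <;> norm_num
      · exact le_refl ((q+1) + ∑ i, c i)
      · exact hc
      · exact fun a b hab => by exact_mod_cast e.strictMono hab

/-- The Bessel polynomial `B_m` evaluated at `x`. -/
noncomputable def besselPoly (m : ℕ) (x : ℝ) : ℝ :=
  ∑ k ∈ Finset.range (m + 1),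
    ((m + k).factorial : ℝ) / (2 ^ k * (m - k).factorial * k.factorial) * x ^ k

theorem bessel_expand (m : ℕ) (x : ℝ) (N : ℕ) (hm : m < N) :
    besselPoly m x = ∑ k ∈ Finset.range N,
      ((m + k).choose (2 * k) : ℝ) * ((2 * k).factorial / (2 ^ k * k.factorial)) * x ^ k := by
  rw [besselPoly]
  have hsub : Finset.range (m + 1) ⊆ Finset.range N := Finset.range_subset_range.mpr (by omega)
  calc ∑ k ∈ Finset.range (m + 1),
        ((m + k).factorial : ℝ) / (2 ^ k * (m - k).factorial * k.factorial) * x ^ k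
      = ∑ k ∈ Finset.range (m + 1),
        ((m + k).choose (2 * k) : ℝ) * ((2 * k).factorial / (2 ^ k * k.factorial)) * x ^ k := by
        refine Finset.sum_congr rfl fun k hk => ?_
        rw [Finset.mem_range] at hk
        have hC : ((m + k).choose (2 * k) : ℝ) * (2 * k).factorial * (m - k).factorial
            = (m + k).factorial := by
          have h1 := Nat.choose_mul_factorial_mul_factorial (show 2 * k ≤ m + k by omega)
          rw [show m + k - 2 * k = m - k by omega] at h1
          exact_mod_cast congrArg (Nat.cast : ℕ → ℝ) h1
        have hcoeff : ((m + k).factorial : ℝ) / (2 ^ k * (m - k).factorial * k.factorial)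
            = ((m + k).choose (2 * k) : ℝ) * ((2 * k).factorial / (2 ^ k * k.factorial)) := by
          rw [← hC]
          have h1 : ((m - k).factorial : ℝ) ≠ 0 := by
            exact_mod_cast Nat.factorial_ne_zero _
          have h2 : (k.factorial : ℝ) ≠ 0 := by
            exact_mod_cast Nat.factorial_ne_zero _
          have h3 : (2 : ℝ) ^ k ≠ 0 := by positivity
          field_simp
        rw [hcoeff]
    _ = ∑ k ∈ Finset.range N,
        ((m + k).choose (2 * k) : ℝ) * ((2 * k).factorial / (2 ^ k * k.factorial)) * x ^ k := by
        refine Finset.sum_subset hsub fun k _ hk => ?_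
        rw [Finset.mem_range, not_lt] at hk
        rw [Nat.choose_eq_zero_of_lt (show m + k < 2 * k by omega)]
        norm_num

theorem bessel_collocation_minors_pos_det_pos (n : ℕ) (t : Fin n → ℝ)
    (hpos : ∀ i, 0 < t i) (hmono : StrictMono t) :
    let M : Matrix (Fin n) (Fin n) ℝ := fun i j => besselPoly j (t i)
    (∀ (k : ℕ) (r c : Fin k → Fin n), StrictMono r → StrictMono c →
        0 < (M.submatrix r c).det) ∧ 0 < M.det := by
  intro M
  set dd : ℕ → ℝ := fun k => ((2 * k).factorial : ℝ) / (2 ^ k * k.factorial) with hdd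
  have hddpos : ∀ k : ℕ, 0 < dd k := by
    intro k
    rw [hdd]
    have h1 : (0:ℝ) < ((2 * k).factorial : ℝ) := by exact_mod_cast Nat.factorial_pos _
    have h2 : (0:ℝ) < (k.factorial : ℝ) := by exact_mod_cast Nat.factorial_pos _
    have h3 : (0:ℝ) < (2:ℝ) ^ k := by positivity
    exact div_pos h1 (by positivity)
  have main : ∀ (p : ℕ) (r c : Fin p → Fin n), StrictMono r → StrictMono c →
      0 < (M.submatrix r c).det := by
    intro p r c hr hc
    have key : M.submatrix r c =
        (Matrix.of fun (i : Fin p) (k : Fin n) => t (r i) ^ (k : ℕ)) *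
        (Matrix.of fun (k : Fin n) (j : Fin p) =>
          (((c j : ℕ) + (k : ℕ)).choose (2 * (k : ℕ)) : ℝ) * dd (k : ℕ)) := by
      ext i j
      rw [Matrix.mul_apply]
      show besselPoly (c j) (t (r i)) = _
      rw [bessel_expand (c j) (t (r i)) n (c j).isLt]
      have hfin : (∑ k : Fin n, t (r i) ^ (k : ℕ) *
            ((((c j : ℕ) + (k : ℕ)).choose (2 * (k : ℕ)) : ℝ) * dd (k : ℕ)))
          = ∑ k ∈ Finset.range n, t (r i) ^ k *
            ((((c j : ℕ) + k).choose (2 * k) : ℝ) * dd k) :=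
        Fin.sum_univ_eq_sum_range
          (fun k => t (r i) ^ k * ((((c j : ℕ) + k).choose (2 * k) : ℝ) * dd k)) n
      simp only [Matrix.of_apply]
      rw [hfin]
      refine Finset.sum_congr rfl fun k _ => ?_
      rw [hdd]
      ring
    rw [key, cauchyBinet]
    have hVpos : ∀ s : {x // x ∈ (Finset.univ : Finset (Fin n)).powersetCard p},
        0 < ((Matrix.of fun (i : Fin p) (k : Fin n) => t (r i) ^ (k : ℕ)).submatrix id
          (s.1.orderEmbOfFin (Finset.mem_powersetCard.mp s.2).2)).det := by
      intro s
      set e := s.1.orderEmbOfFin (Finset.mem_powersetCard.mp s.2).2 with he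
      have hsub : ((Matrix.of fun (i : Fin p) (k : Fin n) => t (r i) ^ (k : ℕ)).submatrix id e)
          = Matrix.of fun i l => t (r i) ^ ((e l : Fin n) : ℕ) := by
        ext i l; rfl
      rw [hsub]
      exact gv_pos_nat p (fun l => ((e l : Fin n) : ℕ)) (fun i => t (r i))
        (fun a b hab => by exact_mod_cast e.strictMono hab)
        (fun a b hab => hmono (hr hab)) (fun i => hpos _)
    have hWnn : ∀ s : {x // x ∈ (Finset.univ : Finset (Fin n)).powersetCard p},
        0 ≤ ((Matrix.of fun (k : Fin n) (j : Fin p) =>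
            (((c j : ℕ) + (k : ℕ)).choose (2 * (k : ℕ)) : ℝ) * dd (k : ℕ)).submatrix
          (s.1.orderEmbOfFin (Finset.mem_powersetCard.mp s.2).2) id).det := by
      intro s
      set e := s.1.orderEmbOfFin (Finset.mem_powersetCard.mp s.2).2 with he
      have hsub : ((Matrix.of fun (k : Fin n) (j : Fin p) =>
            (((c j : ℕ) + (k : ℕ)).choose (2 * (k : ℕ)) : ℝ) * dd (k : ℕ)).submatrix e id)
          = Matrix.of fun l j => (fun l' => dd ((e l' : Fin n) : ℕ)) l *
              (Matrix.of fun (l' : Fin p) (j' : Fin p) =>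
                ((((c j' : ℕ)) + ((e l' : Fin n) : ℕ)).choose (2 * ((e l' : Fin n) : ℕ)) : ℝ)) l j := by
        ext l j
        simp only [Matrix.submatrix_apply, Matrix.of_apply, id]
        ring
      rw [hsub, Matrix.det_mul_column]
      apply mul_nonneg
      · exact Finset.prod_nonneg fun l _ => le_of_lt (hddpos _)
      · rw [← Matrix.det_transpose]
        have htr : (Matrix.of fun (l' : Fin p) (j' : Fin p) =>
              ((((c j' : ℕ)) + ((e l' : Fin n) : ℕ)).choose (2 * ((e l' : Fin n) : ℕ)) : ℝ))ᵀ
            = Matrix.of fun j' l' =>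
              ((((c j' : ℕ)) + ((e l' : Fin n) : ℕ)).choose (2 * ((e l' : Fin n) : ℕ)) : ℝ) := by
          ext j' l'; rfl
        rw [htr]
        exact binom_TN p (fun j' => ((c j' : Fin n) : ℕ)) (fun l' => ((e l' : Fin n) : ℕ))
          (fun a b hab => by exact_mod_cast hc hab)
          (fun a b hab => by exact_mod_cast e.strictMono hab)
    apply Finset.sum_pos'
    · intro s _
      exact mul_nonneg (le_of_lt (hVpos s)) (hWnn s)
    · -- the subset given by the columns `c` gives a positive term
      have hcard : (Finset.univ.image c).card = p := by
        rw [Finset.card_image_of_injective _ hc.injective, Finset.card_univ, Fintype.card_fin]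
      have hmem : Finset.univ.image c ∈ (Finset.univ : Finset (Fin n)).powersetCard p :=
        Finset.mem_powersetCard.mpr ⟨Finset.subset_univ _, hcard⟩
      refine ⟨⟨Finset.univ.image c, hmem⟩, Finset.mem_attach _ _, ?_⟩
      apply mul_pos (hVpos _)
      -- now show the W-minor is positive for this subset
      set s : {x // x ∈ (Finset.univ : Finset (Fin n)).powersetCard p} := ⟨Finset.univ.image c, hmem⟩ with hsdef
      set e := s.1.orderEmbOfFin (Finset.mem_powersetCard.mp s.2).2 with he
      have hec : ∀ l, e l = c l := by
        have := Finset.orderEmbOfFin_unique (Finset.mem_powersetCard.mp s.2).2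
          (f := c) (fun x => Finset.mem_image_of_mem c (Finset.mem_univ x)) hc
        intro l
        exact (congrFun this l).symm
      have hsub : ((Matrix.of fun (k : Fin n) (j : Fin p) =>
            (((c j : ℕ) + (k : ℕ)).choose (2 * (k : ℕ)) : ℝ) * dd (k : ℕ)).submatrix e id)
          = Matrix.of fun l j => (fun l' => dd ((c l' : Fin n) : ℕ)) l *
              (Matrix.of fun (l' : Fin p) (j' : Fin p) =>
                ((((c j' : ℕ)) + ((c l' : Fin n) : ℕ)).choose (2 * ((c l' : Fin n) : ℕ)) : ℝ)) l j := by
        ext l j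
        simp only [Matrix.submatrix_apply, Matrix.of_apply, id, hec]
        ring
      rw [hsub, Matrix.det_mul_column]
      apply mul_pos
      · exact Finset.prod_pos fun l _ => hddpos _
      · have htri : (Matrix.of fun (l' : Fin p) (j' : Fin p) =>
            ((((c j' : ℕ)) + ((c l' : Fin n) : ℕ)).choose (2 * ((c l' : Fin n) : ℕ)) : ℝ)).det
            = ∏ l' : Fin p, (Matrix.of fun (l' : Fin p) (j' : Fin p) =>
              ((((c j' : ℕ)) + ((c l' : Fin n) : ℕ)).choose (2 * ((c l' : Fin n) : ℕ)) : ℝ)) l' l' := by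
          apply Matrix.det_of_upperTriangular
          intro l' j' hlt
          simp only [Matrix.of_apply]
          have hcc : (c j' : ℕ) < (c l' : ℕ) := by
            exact_mod_cast hc (show j' < l' from hlt)
          rw [Nat.choose_eq_zero_of_lt (by omega)]
          norm_num
        rw [htri]
        apply Finset.prod_pos
        intro l' _
        simp only [Matrix.of_apply]
        rw [show (c l' : ℕ) + (c l' : ℕ) = 2 * (c l' : ℕ) by ring, Nat.choose_self]
        norm_num
  exact ⟨main, by
    have := main n id id strictMono_id strictMono_id
    rwa [Matrix.submatrix_id_id] at this⟩
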